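/- For every integer n ≥ 1: ∑_{j=0}^{∞} q^{j^2+j} [2n - j - 2 choose j]'_q = ∑_{r=-∞}^{∞} (-1)^r q^{r(5r+3)/2} [2n choose n - 5r/2 + 3((-1)^r - 1)/4]_q, where [a choose b]'_q equals 1 if a < 0 and b = 0 and equals the usual Gaussian binomial otherwise, and the lower entry on the right is n - 5r/2 for even r and n - (5r+3)/2 for odd r. -/

import Mathlib

open Finset

noncomputable section

abbrev F := RatFunc ℚ

/-- The variable `q`, a transcendental element. -/
def q : F := RatFunc.X

/-- `(b;b)_n = ∏_{i=1}^n (1 - b^i)` -/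
def pq (b : F) (n : ℕ) : F := ∏ i ∈ Finset.range n, (1 - b ^ (i + 1))

/-- Gaussian binomial coefficient in base `b`, zero when `k < 0` or `k > a`. -/
def qbin (b : F) (a k : ℤ) : F :=
  if 0 ≤ k ∧ k ≤ a then pq b a.toNat / (pq b k.toNat * pq b (a - k).toNat) else 0

/-- Primed Gaussian binomial: equals 1 when `a < 0` and `k = 0`. -/
def qbin' (b : F) (a k : ℤ) : F :=
  if a < 0 ∧ k = 0 then 1 else qbin b a k

-- ==================== basic facts ====================

lemma hq0 : q ≠ 0 := RatFunc.X_ne_zero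

lemma one_sub_q_pow_ne_zero (k : ℕ) (hk : 1 ≤ k) : (1 : F) - q ^ k ≠ 0 := by
  have hX : (Polynomial.X : Polynomial ℚ) ^ k ≠ 1 := by
    intro h
    have := congrArg Polynomial.natDegree h
    rw [Polynomial.natDegree_X_pow, Polynomial.natDegree_one] at this
    omega
  have h1 : (1 : Polynomial ℚ) - Polynomial.X ^ k ≠ 0 := fun h => hX (by
    have := sub_eq_zero.mp h; exact this.symm)
  intro h
  apply h1
  apply RatFunc.algebraMap_injective ℚ
  rw [map_sub, map_one, map_pow, RatFunc.algebraMap_X]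
  simpa [q] using h

lemma pq_ne_zero (n : ℕ) : pq q n ≠ 0 := by
  rw [pq]
  apply Finset.prod_ne_zero_iff.2
  intro i _
  exact one_sub_q_pow_ne_zero (i + 1) (by omega)

lemma pq_succ (n : ℕ) : pq q (n + 1) = pq q n * (1 - q ^ (n + 1)) := by
  rw [pq, pq, Finset.prod_range_succ]

lemma qbin_zero_of (a k : ℤ) (h : ¬(0 ≤ k ∧ k ≤ a)) : qbin q a k = 0 := by
  rw [qbin, if_neg h]

lemma qbin_nat (A K : ℕ) (h : K ≤ A) :
    qbin q (A : ℤ) (K : ℤ) = pq q A / (pq q K * pq q (A - K)) := by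
  rw [qbin, if_pos ⟨Int.natCast_nonneg K, by exact_mod_cast h⟩]
  have h1 : ((A : ℤ)).toNat = A := Int.toNat_natCast A
  have h2 : ((K : ℤ)).toNat = K := Int.toNat_natCast K
  have h3 : ((A : ℤ) - K).toNat = A - K := by omega
  rw [h1, h2, h3]

lemma qbin_lzero (a : ℤ) (ha : 0 ≤ a) : qbin q a 0 = 1 := by
  obtain ⟨A, rfl⟩ := Int.eq_ofNat_of_zero_le ha
  have h := qbin_nat A 0 (Nat.zero_le A)
  rw [show ((0 : ℕ) : ℤ) = 0 from rfl] at h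
  rw [h, show pq q 0 = 1 from by simp [pq], one_mul, Nat.sub_zero,
    div_self (pq_ne_zero A)]

lemma qbin_self (a : ℤ) (ha : 0 ≤ a) : qbin q a a = 1 := by
  obtain ⟨A, rfl⟩ := Int.eq_ofNat_of_zero_le ha
  have := qbin_nat A A le_rfl
  simp only [Nat.sub_self] at this
  rw [this]
  rw [show pq q 0 = 1 from by simp [pq]]
  rw [mul_one, div_self (pq_ne_zero A)]

lemma pascal_core (c b : ℕ) :
    pq q (c + b + 2) / (pq q (c + 1) * pq q (b + 1)) =
      pq q (c + b + 1) / (pq q (c + 1) * pq q b)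
        + q ^ (b + 1) * (pq q (c + b + 1) / (pq q c * pq q (b + 1))) := by
  have e1 : pq q (c + b + 2) = pq q (c + b + 1) * (1 - q ^ (c + b + 2)) := pq_succ (c + b + 1)
  have e2 : pq q (c + 1) = pq q c * (1 - q ^ (c + 1)) := pq_succ c
  have e3 : pq q (b + 1) = pq q b * (1 - q ^ (b + 1)) := pq_succ b
  rw [e1, e2, e3]
  have h1 := pq_ne_zero c
  have h2 := pq_ne_zero b
  have h3 := pq_ne_zero (c + b + 1)
  have h4 := one_sub_q_pow_ne_zero (c + 1) (by omega)
  have h5 := one_sub_q_pow_ne_zero (b + 1) (by omega)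
  field_simp
  ring

-- Pascal recurrence (universal in k, needs 1 ≤ a)
lemma pascal (a k : ℤ) (ha : 1 ≤ a) :
    qbin q a k = qbin q (a - 1) k + q ^ (a - k) * qbin q (a - 1) (k - 1) := by
  rcases lt_or_ge k 0 with hk | hk
  · rw [qbin_zero_of a k (by omega), qbin_zero_of (a - 1) k (by omega),
      qbin_zero_of (a - 1) (k - 1) (by omega)]
    ring
  rcases eq_or_lt_of_le hk with hk0 | hkpos
  · rw [← hk0, qbin_lzero a (by omega), qbin_lzero (a - 1) (by omega),
      qbin_zero_of (a - 1) (0 - 1) (by omega)]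
    ring
  rcases lt_trichotomy k a with hka | hka | hka
  · -- 1 ≤ k ≤ a - 1, core case
    obtain ⟨c, hc⟩ := Int.eq_ofNat_of_zero_le (show (0 : ℤ) ≤ k - 1 by omega)
    obtain ⟨b, hb⟩ := Int.eq_ofNat_of_zero_le (show (0 : ℤ) ≤ a - k - 1 by omega)
    have hak : a - k = ((b + 1 : ℕ) : ℤ) := by push_cast; omega
    have ha1 : a - 1 = ((c + b + 1 : ℕ) : ℤ) := by push_cast; omega
    have hk1 : k - 1 = ((c : ℕ) : ℤ) := by push_cast; omega
    have ha' : a = ((c + b + 2 : ℕ) : ℤ) := by push_cast; omega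
    have hk' : k = ((c + 1 : ℕ) : ℤ) := by push_cast; omega
    rw [hak, ha1, hk1, ha', hk', zpow_natCast]
    have Q1 := qbin_nat (c + b + 2) (c + 1) (by omega)
    rw [show (c + b + 2) - (c + 1) = b + 1 from by omega] at Q1
    have Q2 := qbin_nat (c + b + 1) (c + 1) (by omega)
    rw [show (c + b + 1) - (c + 1) = b from by omega] at Q2
    have Q3 := qbin_nat (c + b + 1) c (by omega)
    rw [show (c + b + 1) - c = b + 1 from by omega] at Q3
    rw [Q1, Q2, Q3]
    exact pascal_core c b
  · -- k = a
    rw [hka]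
    rw [qbin_self a (by omega), qbin_zero_of (a - 1) a (by omega),
      qbin_self (a - 1) (by omega), sub_self, zpow_zero]
    ring
  · rw [qbin_zero_of a k (by omega), qbin_zero_of (a - 1) k (by omega),
      qbin_zero_of (a - 1) (k - 1) (by omega)]
    ring

lemma ratio_core (c b : ℕ) :
    (1 - q ^ (c + 1)) * (pq q (c + b + 1) / (pq q (c + 1) * pq q b)) =
      (1 - q ^ (b + 1)) * (pq q (c + b + 1) / (pq q c * pq q (b + 1))) := by
  have e2 : pq q (c + 1) = pq q c * (1 - q ^ (c + 1)) := pq_succ c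
  have e3 : pq q (b + 1) = pq q b * (1 - q ^ (b + 1)) := pq_succ b
  rw [e2, e3]
  have h1 := pq_ne_zero c
  have h2 := pq_ne_zero b
  have h4 := one_sub_q_pow_ne_zero (c + 1) (by omega)
  have h5 := one_sub_q_pow_ne_zero (b + 1) (by omega)
  field_simp

-- ratio relation (fully universal)
lemma ratio (a k : ℤ) :
    (1 - q ^ (k + 1)) * qbin q a (k + 1) = (1 - q ^ (a - k)) * qbin q a k := by
  rcases lt_or_ge a 0 with hao | hao
  · rw [qbin_zero_of a (k + 1) (by omega), qbin_zero_of a k (by omega)]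
    ring
  rcases lt_or_ge k 0 with hk | hk
  · rcases eq_or_lt_of_le (by omega : k ≤ -1) with hk1 | hk1
    · rw [show k = -1 from by omega]
      rw [show (-1 : ℤ) + 1 = 0 from rfl, zpow_zero, sub_self, zero_mul,
        qbin_zero_of a (-1) (by omega), mul_zero]
    · rw [qbin_zero_of a (k + 1) (by omega), qbin_zero_of a k (by omega)]
      ring
  rcases lt_trichotomy k a with hka | hka | hka
  · -- 0 ≤ k ≤ a - 1, core
    obtain ⟨c, hc⟩ := Int.eq_ofNat_of_zero_le hk
    obtain ⟨b, hb⟩ := Int.eq_ofNat_of_zero_le (show (0 : ℤ) ≤ a - k - 1 by omega)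
    have hak : a - k = ((b + 1 : ℕ) : ℤ) := by push_cast; omega
    have hk2 : k + 1 = ((c + 1 : ℕ) : ℤ) := by push_cast; omega
    have ha' : a = ((c + b + 1 : ℕ) : ℤ) := by push_cast; omega
    rw [hak, hk2, ha', hc, zpow_natCast, zpow_natCast]
    have Q1 := qbin_nat (c + b + 1) (c + 1) (by omega)
    rw [show (c + b + 1) - (c + 1) = b from by omega] at Q1
    have Q2 := qbin_nat (c + b + 1) c (by omega)
    rw [show (c + b + 1) - c = b + 1 from by omega] at Q2
    rw [Q1, Q2]
    exact ratio_core c b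
  · rw [hka]
    rw [qbin_zero_of a (a + 1) (by omega), sub_self, zpow_zero, sub_self,
      zero_mul, mul_zero]
  · rw [qbin_zero_of a (k + 1) (by omega), qbin_zero_of a k (by omega)]
    ring

-- ==================== the two sides ====================

def ee (r : ℤ) : ℤ := r * (5 * r + 3) / 2

def gg (M r : ℤ) : ℤ := if Even (M - 5 * r) then (M - 5 * r) / 2 else (M - 5 * r - 3) / 2

def T (M r : ℤ) : F := (-1 : F) ^ r * q ^ ee r * qbin q M (gg M r)

def W (M r : ℤ) : F :=
  (-1 : F) ^ (r + 1) * q ^ (ee r + (M - 5 * r - 1) / 2) * qbin q (M - 2) ((M - 5 * r - 1) / 2)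

def E (M : ℤ) : F := ∑ᶠ r : ℤ, T M r

def D (m : ℤ) : F := ∑ᶠ j : ℕ, q ^ (j ^ 2 + j) * qbin q (m - j) (j : ℤ)

lemma two_mul_ee (r : ℤ) : 2 * ee r = r * (5 * r + 3) := by
  have h : (2 : ℤ) ∣ r * (5 * r + 3) := by
    rcases Int.even_or_odd r with ⟨s, hs⟩ | ⟨s, hs⟩
    · exact ⟨s * (5 * r + 3), by rw [hs]; ring⟩
    · exact ⟨r * (5 * s + 4), by rw [hs]; ring⟩
  rw [ee, Int.mul_ediv_cancel' h]

lemma ee_succ (r : ℤ) : ee (r + 1) = ee r + (5 * r + 4) := by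
  have h1 := two_mul_ee (r + 1)
  have h2 := two_mul_ee r
  have key : 2 * ee (r + 1) = 2 * (ee r + (5 * r + 4)) := by linear_combination h1 - h2
  omega

lemma ee_succ2 (r : ℤ) : ee (r + 2) = ee r + (10 * r + 13) := by
  have h1 := ee_succ (r + 1)
  have h2 := ee_succ r
  have : r + 1 + 1 = r + 2 := by ring
  rw [this] at h1
  omega

lemma T_out (M r : ℤ) (h : 5 * r > M ∨ 5 * r ≤ -(M + 5)) : T M r = 0 := by
  have : qbin q M (gg M r) = 0 := by
    apply qbin_zero_of
    rw [gg]
    split <;> omega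
  rw [T, this, mul_zero]

-- ==================== finsum conversions ====================

lemma E_eq_sum (M lo : ℤ) (N : ℕ)
    (h : ∀ r : ℤ, T M r ≠ 0 → lo ≤ r ∧ r < lo + N) :
    E M = ∑ i ∈ range N, T M (lo + i) := by
  have hinj : Function.Injective (fun i : ℕ => lo + (i : ℤ)) := by
    intro x y hxy
    simp only at hxy
    omega
  have hsub : Function.support (fun r : ℤ => T M r) ⊆
      ((range N).map ⟨fun i : ℕ => lo + (i : ℤ), hinj⟩ : Finset ℤ) := by
    intro r hr
    simp only [Finset.coe_map, Set.mem_image, Finset.mem_coe, Finset.mem_range,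
      Function.Embedding.coeFn_mk]
    have := h r hr
    exact ⟨(r - lo).toNat, by omega, by omega⟩
  rw [E, finsum_eq_sum_of_support_subset _ hsub, Finset.sum_map]
  rfl

lemma D_eq_sum (m : ℤ) (N : ℕ)
    (h : ∀ j : ℕ, q ^ (j ^ 2 + j) * qbin q (m - j) (j : ℤ) ≠ 0 → j < N) :
    D m = ∑ j ∈ range N, q ^ (j ^ 2 + j) * qbin q (m - j) (j : ℤ) := by
  have hsub : Function.support (fun j : ℕ => q ^ (j ^ 2 + j) * qbin q (m - j) (j : ℤ)) ⊆
      (range N : Finset ℕ) := by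
    intro j hj
    simp only [Finset.coe_range, Set.mem_Iio]
    exact h j hj
  rw [D, finsum_eq_sum_of_support_subset _ hsub]

lemma sum_pair (K : ℕ) (f : ℕ → F) :
    ∑ i ∈ range (2 * K), f i = ∑ s ∈ range K, (f (2 * s) + f (2 * s + 1)) := by
  induction K with
  | zero => simp
  | succ n ih =>
      rw [show 2 * (n + 1) = 2 * n + 1 + 1 from by ring, sum_range_succ, sum_range_succ,
        ih, sum_range_succ]
      ring

-- ==================== the raw local identity ====================

lemma raw (M r t : ℤ) (h2 : 2 ≤ M) (h5 : M = 5 * r + 2 * t + 1) :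
    qbin q M (t - 1) - q ^ (5 * r + 4) * qbin q M (t - 2)
      - qbin q (M - 1) t + q ^ (5 * r + 4) * qbin q (M - 1) (t - 4)
      - q ^ (M - 2) * qbin q (M - 2) (t - 2)
      + q ^ (5 * r + 4) * q ^ (M - 2) * qbin q (M - 2) (t - 3)
      + q ^ t * qbin q (M - 2) t
      - q ^ (10 * r + 8) * q ^ t * qbin q (M - 2) (t - 5) = 0 := by
  have split : ∀ (β γ δ : ℕ) (X : ℤ), X = β * r + γ * (t - 3) + δ →
      q ^ X = (q ^ r) ^ β * (q ^ (t - 3)) ^ γ * q ^ δ := by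
    intro β γ δ X hX
    subst hX
    rw [zpow_add₀ hq0, zpow_add₀ hq0,
      show (β : ℤ) * r = r * (β : ℤ) from by ring, zpow_mul, zpow_natCast,
      show (γ : ℤ) * (t - 3) = (t - 3) * (γ : ℤ) from by ring, zpow_mul, zpow_natCast,
      zpow_natCast]
  have h1 := pascal M (t - 1) (by omega)
  have h2 := pascal M (t - 2) (by omega)
  have h3 := pascal (M - 1) t (by omega)
  have h4 := pascal (M - 1) (t - 1) (by omega)
  have h5 := pascal (M - 1) (t - 2) (by omega)
  have h6 := pascal (M - 1) (t - 3) (by omega)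
  have h7 := pascal (M - 1) (t - 4) (by omega)
  have r1 := ratio (M - 2) (t - 1)
  have r3 := ratio (M - 2) (t - 3)
  have r4 := ratio (M - 2) (t - 4)
  rw [show M - 1 - 1 = M - 2 from by ring] at h3 h4 h5 h6 h7
  rw [show t - 1 - 1 = t - 2 from by ring] at h1 h4
  rw [show t - 2 - 1 = t - 3 from by ring] at h2 h5
  rw [show t - 3 - 1 = t - 4 from by ring] at h6
  rw [show t - 4 - 1 = t - 5 from by ring] at h7
  rw [show t - 1 + 1 = t from by ring] at r1
  rw [show t - 3 + 1 = t - 2 from by ring] at r3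
  rw [show t - 4 + 1 = t - 3 from by ring] at r4
  -- exponent splits
  rw [split 5 1 5 (M - (t - 1)) (by omega)] at h1
  rw [split 5 1 6 (M - (t - 2)) (by omega)] at h2
  rw [split 5 1 3 (M - 1 - t) (by omega)] at h3
  rw [split 5 1 4 (M - 1 - (t - 1)) (by omega)] at h4
  rw [split 5 1 5 (M - 1 - (t - 2)) (by omega)] at h5
  rw [split 5 1 6 (M - 1 - (t - 3)) (by omega)] at h6
  rw [split 5 1 7 (M - 1 - (t - 4)) (by omega)] at h7
  rw [split 0 1 3 t (by omega), split 5 1 3 (M - 2 - (t - 1)) (by omega)] at r1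
  rw [split 0 1 1 (t - 2) (by omega), split 5 1 5 (M - 2 - (t - 3)) (by omega)] at r3
  rw [split 0 1 0 (t - 3) (by omega), split 5 1 6 (M - 2 - (t - 4)) (by omega)] at r4
  rw [split 5 0 4 (5 * r + 4) (by omega), split 5 2 5 (M - 2) (by omega),
    split 0 1 3 t (by omega), split 10 0 8 (10 * r + 8) (by omega)]
  set U : F := q ^ r with hU
  set C : F := q ^ (t - 3) with hC
  linear_combination h1 - (U ^ 5 * q ^ 4) * h2 - h3 + (U ^ 5 * q ^ 4) * h7 + h4
    + (U ^ 5 * C * q ^ 5 - U ^ 5 * q ^ 4) * h5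
    - (U ^ 5 * q ^ 4) * (U ^ 5 * C * q ^ 6) * h6
    - r1 - (U ^ 5 * q ^ 4) * (1 - C) * r3
    - (U ^ 5 * q ^ 4) * (1 + U ^ 5 * C * q ^ 6) * r4

lemma pair_step (M r : ℤ) (h2 : 2 ≤ M) (hodd : (M - 5 * r) % 2 = 1) :
    (T M r - T (M - 1) r - q ^ (M - 2) * T (M - 2) r)
      + (T M (r + 1) - T (M - 1) (r + 1) - q ^ (M - 2) * T (M - 2) (r + 1))
      = W M r - W M (r + 2) := by
  have hne : ((-1 : F)) ≠ 0 := by norm_num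
  obtain ⟨t, ht⟩ : ∃ t : ℤ, M = 5 * r + 2 * t + 1 := ⟨(M - 5 * r - 1) / 2, by omega⟩
  have g1 : gg M r = t - 1 := by
    rw [gg, if_neg (by rw [Int.even_iff]; omega)]; omega
  have g2 : gg (M - 1) r = t := by
    rw [gg, if_pos (by rw [Int.even_iff]; omega)]; omega
  have g3 : gg (M - 2) r = t - 2 := by
    rw [gg, if_neg (by rw [Int.even_iff]; omega)]; omega
  have g4 : gg M (r + 1) = t - 2 := by
    rw [gg, if_pos (by rw [Int.even_iff]; omega)]; omega
  have g5 : gg (M - 1) (r + 1) = t - 4 := by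
    rw [gg, if_neg (by rw [Int.even_iff]; omega)]; omega
  have g6 : gg (M - 2) (r + 1) = t - 3 := by
    rw [gg, if_pos (by rw [Int.even_iff]; omega)]; omega
  simp only [T, W, g1, g2, g3, g4, g5, g6]
  rw [show (M - 5 * r - 1) / 2 = t from by omega,
    show (M - 5 * (r + 2) - 1) / 2 = t - 5 from by omega]
  rw [show ee r + t = ee r + t from rfl]
  rw [ee_succ r, show ee (r + 2) + (t - 5) = ee r + ((10 * r + 8) + t) from by
      have := ee_succ2 r; omega]
  rw [show r + 2 + 1 = r + 3 from by ring]
  rw [show ((-1 : F)) ^ (r + 1) = -((-1 : F) ^ r) from by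
      rw [zpow_add₀ hne, zpow_one]; ring,
    show ((-1 : F)) ^ (r + 3) = -((-1 : F) ^ r) from by
      rw [zpow_add₀ hne]; norm_num]
  rw [zpow_add₀ hq0 (ee r) (5 * r + 4), zpow_add₀ hq0 (ee r) t,
    zpow_add₀ hq0 (ee r) ((10 * r + 8) + t), zpow_add₀ hq0 (10 * r + 8) t]
  linear_combination ((-1 : F) ^ r * q ^ ee r) * raw M r t h2 ht

lemma W_out (M r : ℤ) (h : (M - 5 * r - 1) / 2 < 0 ∨ M - 2 < (M - 5 * r - 1) / 2) :
    W M r = 0 := by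
  rw [W, qbin_zero_of _ _ (by omega), mul_zero]

-- ==================== recurrences ====================

lemma E_rec (M : ℤ) (hM : 4 ≤ M) : E M = E (M - 1) + q ^ (M - 2) * E (M - 2) := by
  set R := M.toNat with hRdef
  have hR : (R : ℤ) = M := Int.toNat_of_nonneg (by omega)
  set lo : ℤ := -(2 * (R : ℤ)) - 1 - M % 2 with hlo
  set K : ℕ := 2 * R + 2 with hK
  set N : ℕ := 2 * K with hN
  have hNZ : (N : ℤ) = 4 * (R : ℤ) + 4 := by push_cast [hN, hK]; ring
  have cover : ∀ a r' : ℤ, 0 ≤ a → a ≤ M → ¬(lo ≤ r' ∧ r' < lo + (N : ℤ)) → T a r' = 0 := by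
    intro a r' h1 h2 h3
    apply T_out
    omega
  have hE1 : E M = ∑ i ∈ range N, T M (lo + i) := by
    apply E_eq_sum
    intro r' h
    by_contra hc
    exact h (cover M r' (by omega) le_rfl hc)
  have hE2 : E (M - 1) = ∑ i ∈ range N, T (M - 1) (lo + i) := by
    apply E_eq_sum
    intro r' h
    by_contra hc
    exact h (cover (M - 1) r' (by omega) (by omega) hc)
  have hE3 : E (M - 2) = ∑ i ∈ range N, T (M - 2) (lo + i) := by
    apply E_eq_sum
    intro r' h
    by_contra hc
    exact h (cover (M - 2) r' (by omega) (by omega) hc)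
  have key : E M - E (M - 1) - q ^ (M - 2) * E (M - 2) = 0 := by
    rw [hE1, hE2, hE3, Finset.mul_sum, ← Finset.sum_sub_distrib, ← Finset.sum_sub_distrib]
    rw [hN, sum_pair K (fun i => T M (lo + i) - T (M - 1) (lo + i)
        - q ^ (M - 2) * T (M - 2) (lo + i))]
    have hstep : ∀ s ∈ range K,
        (T M (lo + (2 * s : ℕ)) - T (M - 1) (lo + (2 * s : ℕ))
          - q ^ (M - 2) * T (M - 2) (lo + (2 * s : ℕ)))
        + (T M (lo + (2 * s + 1 : ℕ)) - T (M - 1) (lo + (2 * s + 1 : ℕ))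
          - q ^ (M - 2) * T (M - 2) (lo + (2 * s + 1 : ℕ)))
        = W M (lo + 2 * (s : ℤ)) - W M (lo + 2 * ((s : ℤ) + 1)) := by
      intro s _
      have hc1 : lo + ((2 * s : ℕ) : ℤ) = lo + 2 * (s : ℤ) := by push_cast; ring
      have hc2 : lo + ((2 * s + 1 : ℕ) : ℤ) = (lo + 2 * (s : ℤ)) + 1 := by push_cast; ring
      rw [hc1, hc2, pair_step M (lo + 2 * (s : ℤ)) (by omega) (by omega),
        show (lo + 2 * (s : ℤ)) + 2 = lo + 2 * ((s : ℤ) + 1) from by ring]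
    rw [Finset.sum_congr rfl hstep]
    have htel : ∀ s : ℕ, W M (lo + 2 * ((s : ℤ) + 1)) = W M (lo + 2 * ((s + 1 : ℕ) : ℤ)) := by
      intro s
      have hcast : (s : ℤ) + 1 = ((s + 1 : ℕ) : ℤ) := by push_cast; ring
      rw [hcast]
    calc ∑ s ∈ range K, (W M (lo + 2 * (s : ℤ)) - W M (lo + 2 * ((s : ℤ) + 1)))
        = ∑ s ∈ range K, ((fun n : ℕ => W M (lo + 2 * (n : ℤ))) s
            - (fun n : ℕ => W M (lo + 2 * (n : ℤ))) (s + 1)) := by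
          apply Finset.sum_congr rfl
          intro s _
          rw [htel s]
      _ = W M (lo + 2 * ((0 : ℕ) : ℤ)) - W M (lo + 2 * ((K : ℕ) : ℤ)) :=
          Finset.sum_range_sub' (fun n : ℕ => W M (lo + 2 * (n : ℤ))) K
      _ = 0 := by
          rw [W_out M (lo + 2 * ((0 : ℕ) : ℤ)) (by push_cast; omega),
            W_out M (lo + 2 * ((K : ℕ) : ℤ)) (by push_cast [hK]; omega)]
          ring
  linear_combination key

lemma D_rec (m : ℤ) (hm : 2 ≤ m) : D m = D (m - 1) + q ^ m * D (m - 2) := by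
  set N := m.toNat with hN
  have hNm : (N : ℤ) = m := Int.toNat_of_nonneg (by omega)
  have hN2 : 2 ≤ N := by omega
  have hzero : ∀ (a : ℤ) (j : ℕ), 2 * (j : ℤ) > a →
      q ^ (j ^ 2 + j) * qbin q (a - j) (j : ℤ) = 0 := by
    intro a j hj
    rw [qbin_zero_of _ _ (by omega), mul_zero]
  have h1 : D m = ∑ j ∈ range N, q ^ (j ^ 2 + j) * qbin q (m - j) (j : ℤ) := by
    apply D_eq_sum
    intro j hj
    by_contra h'
    exact hj (hzero m j (by omega))
  have h2 : D (m - 1) = ∑ j ∈ range N, q ^ (j ^ 2 + j) * qbin q (m - 1 - j) (j : ℤ) := by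
    apply D_eq_sum
    intro j hj
    by_contra h'
    exact hj (hzero (m - 1) j (by omega))
  have h3 : D (m - 2) = ∑ j ∈ range (N - 1),
      q ^ (j ^ 2 + j) * qbin q (m - 2 - j) (j : ℤ) := by
    apply D_eq_sum
    intro j hj
    by_contra h'
    exact hj (hzero (m - 2) j (by omega))
  rw [h1, h2, h3]
  have hsplit : ∀ j ∈ range N,
      q ^ (j ^ 2 + j) * qbin q (m - j) (j : ℤ) =
        q ^ (j ^ 2 + j) * qbin q (m - 1 - j) (j : ℤ)
          + q ^ (j ^ 2 + j) * (q ^ (m - 2 * j) * qbin q (m - 1 - j) ((j : ℤ) - 1)) := by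
    intro j hj
    rw [Finset.mem_range] at hj
    have hp := pascal (m - j) (j : ℤ) (by omega)
    rw [show m - (j : ℤ) - 1 = m - 1 - j from by ring,
      show m - (j : ℤ) - j = m - 2 * j from by ring] at hp
    rw [hp, mul_add]
  rw [Finset.sum_congr rfl hsplit, Finset.sum_add_distrib]
  congr 1
  -- second sum equals q^m * D (m-2)
  obtain ⟨N', hN'⟩ : ∃ N', N = N' + 1 := ⟨N - 1, by omega⟩
  rw [hN', Finset.sum_range_succ']
  have hzz : q ^ ((0 : ℕ) ^ 2 + 0) * (q ^ (m - 2 * (0 : ℕ)) *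
      qbin q (m - 1 - (0 : ℕ)) (((0 : ℕ) : ℤ) - 1)) = 0 := by
    rw [qbin_zero_of _ _ (by omega), mul_zero, mul_zero]
  rw [hzz, add_zero]
  have hterm : ∀ j ∈ range N', q ^ ((j + 1) ^ 2 + (j + 1)) *
      (q ^ (m - 2 * (j + 1 : ℕ)) * qbin q (m - 1 - (j + 1 : ℕ)) (((j + 1 : ℕ) : ℤ) - 1)) =
      q ^ m * (q ^ (j ^ 2 + j) * qbin q (m - 2 - j) (j : ℤ)) := by
    intro j hj
    have hc1 : (((j + 1 : ℕ) : ℤ)) - 1 = (j : ℤ) := by push_cast; ring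
    have hc2 : m - 1 - ((j + 1 : ℕ) : ℤ) = m - 2 - j := by push_cast; ring
    have hc3 : m - 2 * ((j + 1 : ℕ) : ℤ) = m - 2 * j - 2 := by push_cast; ring
    rw [hc1, hc2, hc3]
    rw [show (j + 1) ^ 2 + (j + 1) = (j ^ 2 + j) + (2 * j + 2) from by ring, pow_add]
    have hmerge : q ^ ((2 * j + 2 : ℕ)) * q ^ (m - 2 * j - 2) = q ^ m := by
      rw [← zpow_natCast q (2 * j + 2), ← zpow_add₀ hq0]
      congr 1
      push_cast
      ring
    calc q ^ (j ^ 2 + j) * q ^ (2 * j + 2) *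
          (q ^ (m - 2 * (j : ℤ) - 2) * qbin q (m - 2 - j) (j : ℤ))
        = (q ^ ((2 * j + 2 : ℕ)) * q ^ (m - 2 * (j : ℤ) - 2)) *
          (q ^ (j ^ 2 + j) * qbin q (m - 2 - j) (j : ℤ)) := by ring
      _ = q ^ m * (q ^ (j ^ 2 + j) * qbin q (m - 2 - j) (j : ℤ)) := by rw [hmerge]
  rw [Finset.sum_congr rfl hterm, ← Finset.mul_sum,
    show N' + 1 - 1 = N' from by omega]

-- ==================== base cases ====================

lemma qbin_two_one : qbin q 2 1 = 1 + q := by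
  have h := qbin_nat 2 1 (by omega)
  have e1 : pq q 1 = 1 - q := by simp [pq]
  have e2 : pq q 2 = (1 - q) * (1 - q ^ 2) := by
    rw [show (2 : ℕ) = 1 + 1 from rfl, pq_succ, e1]
  rw [show ((2 : ℕ) : ℤ) = 2 from rfl, show ((1 : ℕ) : ℤ) = 1 from rfl] at h
  rw [h, show (2 - 1 : ℕ) = 1 from rfl, e1, e2]
  have hne : (1 : F) - q ≠ 0 := by simpa using one_sub_q_pow_ne_zero 1 le_rfl
  field_simp
  ring

lemma E_two : E 2 = 1 := by
  have h : E 2 = ∑ i ∈ range 2, T 2 (-1 + i) := by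
    apply E_eq_sum
    intro r h
    by_contra hc
    exact h (T_out 2 r (by push_cast at hc; omega))
  rw [h, Finset.sum_range_succ, Finset.sum_range_one]
  have e1 : T 2 (-1 + ((0 : ℕ) : ℤ)) = -q := by
    rw [show (-1 : ℤ) + ((0 : ℕ) : ℤ) = -1 from by norm_num, T]
    rw [show gg 2 (-1) = 2 from by rw [gg, if_neg (by decide)]; decide, show ee (-1) = 1 from by rw [ee]; rfl]
    rw [qbin_self 2 (by norm_num), zpow_one]
    rw [show ((-1 : F)) ^ (-1 : ℤ) = -1 from by
      rw [zpow_neg, zpow_one, inv_neg, inv_one]]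
    ring
  have e2 : T 2 (-1 + ((1 : ℕ) : ℤ)) = 1 + q := by
    rw [show (-1 : ℤ) + ((1 : ℕ) : ℤ) = 0 from by norm_num, T]
    rw [show gg 2 0 = 1 from by rw [gg, if_pos (by decide)]; decide, show ee 0 = 0 from by rw [ee]; rfl]
    rw [qbin_two_one, zpow_zero, zpow_zero]
    ring
  rw [e1, e2]
  ring

lemma E_three : E 3 = 1 := by
  have h : E 3 = ∑ i ∈ range 2, T 3 (-1 + i) := by
    apply E_eq_sum
    intro r h
    by_contra hc
    exact h (T_out 3 r (by push_cast at hc; omega))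
  rw [h, Finset.sum_range_succ, Finset.sum_range_one]
  have e1 : T 3 (-1 + ((0 : ℕ) : ℤ)) = 0 := by
    rw [show (-1 : ℤ) + ((0 : ℕ) : ℤ) = -1 from by norm_num, T]
    rw [show gg 3 (-1) = 4 from by rw [gg, if_pos (by decide)]; decide]
    rw [qbin_zero_of 3 4 (by omega), mul_zero]
  have e2 : T 3 (-1 + ((1 : ℕ) : ℤ)) = 1 := by
    rw [show (-1 : ℤ) + ((1 : ℕ) : ℤ) = 0 from by norm_num, T]
    rw [show gg 3 0 = 0 from by rw [gg, if_neg (by decide)]; decide, show ee 0 = 0 from by rw [ee]; rfl]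
    rw [qbin_lzero 3 (by norm_num), zpow_zero, zpow_zero]
    ring
  rw [e1, e2]
  ring

lemma D_zero : D 0 = 1 := by
  have h1 : D 0 = ∑ j ∈ range 1, q ^ (j ^ 2 + j) * qbin q (0 - j) (j : ℤ) := by
    apply D_eq_sum
    intro j hj
    by_contra h'
    apply hj
    rw [qbin_zero_of _ _ (by omega), mul_zero]
  rw [h1, Finset.sum_range_one]
  norm_num
  exact qbin_lzero 0 le_rfl

lemma D_one : D 1 = 1 := by
  have h1 : D 1 = ∑ j ∈ range 1, q ^ (j ^ 2 + j) * qbin q (1 - j) (j : ℤ) := by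
    apply D_eq_sum
    intro j hj
    by_contra h'
    apply hj
    rw [qbin_zero_of _ _ (by omega), mul_zero]
  rw [h1, Finset.sum_range_one]
  norm_num
  exact qbin_lzero 1 (by omega)

-- ==================== main induction ====================

lemma main_claim (k : ℕ) : D (k : ℤ) = E ((k : ℤ) + 2) := by
  induction k using Nat.twoStepInduction with
  | zero =>
      rw [show ((0 : ℕ) : ℤ) = 0 from rfl, D_zero, show (0 : ℤ) + 2 = 2 from rfl, E_two]
  | one =>
      rw [show ((1 : ℕ) : ℤ) = 1 from rfl, D_one, show (1 : ℤ) + 2 = 3 from rfl, E_three]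
  | more k ih1 ih2 =>
      have hc : ((k + 2 : ℕ) : ℤ) = (k : ℤ) + 2 := by push_cast; ring
      have hc1 : ((k + 1 : ℕ) : ℤ) = (k : ℤ) + 1 := by push_cast; ring
      rw [hc1] at ih2
      rw [hc, D_rec ((k : ℤ) + 2) (by omega),
        show (k : ℤ) + 2 - 1 = (k : ℤ) + 1 from by ring,
        show (k : ℤ) + 2 - 2 = (k : ℤ) from by ring, ih1, ih2]
      have hE := E_rec ((k : ℤ) + 4) (by omega)
      rw [show (k : ℤ) + 4 - 1 = (k : ℤ) + 1 + 2 from by ring,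
        show (k : ℤ) + 4 - 2 = (k : ℤ) + 2 from by ring] at hE
      rw [show (k : ℤ) + 2 + 2 = (k : ℤ) + 4 from by ring, hE]

theorem stmt9 (n : ℕ) (hn : 1 ≤ n) :
    (∑ᶠ j : ℕ, q ^ (j ^ 2 + j) * qbin' q (2 * (n : ℤ) - j - 2) (j : ℤ)) =
      ∑ᶠ r : ℤ, (-1 : F) ^ r * q ^ (r * (5 * r + 3) / 2) *
        qbin q (2 * (n : ℤ))
          (if Even r then (n : ℤ) - 5 * r / 2 else (n : ℤ) - (5 * r + 3) / 2) := by
  have hn' : 1 ≤ (n : ℤ) := by exact_mod_cast hn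
  have hL : (∑ᶠ j : ℕ, q ^ (j ^ 2 + j) * qbin' q (2 * (n : ℤ) - j - 2) (j : ℤ))
      = D (2 * (n : ℤ) - 2) := by
    rw [D]
    apply finsum_congr
    intro j
    congr 1
    rw [qbin', if_neg (by
      rintro ⟨ha, hb⟩
      omega)]
    congr 1
    ring
  have hidx : ∀ r : ℤ, (if Even r then (n : ℤ) - 5 * r / 2 else (n : ℤ) - (5 * r + 3) / 2)
      = gg (2 * (n : ℤ)) r := by
    intro r
    rcases Int.even_or_odd r with he | ho
    · rw [if_pos he, gg, if_pos (by rw [Int.even_iff] at he ⊢; omega)]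
      rw [Int.even_iff] at he
      omega
    · have hne : ¬ Even r := by rw [Int.even_iff]; rw [Int.odd_iff] at ho; omega
      rw [if_neg hne, gg, if_neg (by rw [Int.even_iff]; rw [Int.odd_iff] at ho; omega)]
      rw [Int.odd_iff] at ho
      omega
  have hR : (∑ᶠ r : ℤ, (-1 : F) ^ r * q ^ (r * (5 * r + 3) / 2) *
      qbin q (2 * (n : ℤ))
        (if Even r then (n : ℤ) - 5 * r / 2 else (n : ℤ) - (5 * r + 3) / 2))
      = E (2 * (n : ℤ)) := by
    rw [E]
    apply finsum_congr
    intro r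
    rw [T, ee, hidx r]
  rw [hL, hR]
  have := main_claim (2 * n - 2)
  have hc : ((2 * n - 2 : ℕ) : ℤ) = 2 * (n : ℤ) - 2 := by omega
  have hc2 : ((2 * n - 2 : ℕ) : ℤ) + 2 = 2 * (n : ℤ) := by omega
  rw [hc2] at this
  rw [hc] at this
  exact this
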